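/- Let l ≥ 3 be an integer and let c > 0 be a real number. In ℝ^l set σ = ∑_{1≤i<j≤l} ((ε_i − ε_j) + (ε_i + ε_j)) and τ = ∑_{i=1}^l ε_i, and let Ψ = {ε_1} ∪ {ε_j + ε_{j+1} : 1 ≤ j ≤ l−1}. Then: (i) every element of Ψ is a positive root of B_l and there exist real numbers m_β > 0 (β ∈ Ψ) with σ + c·τ = ∑_{β∈Ψ} m_β·β; (ii) Ψ spans ℝ^l; (iii) for all β, β′ ∈ Ψ (including β = β′), β + β′ ∉ Φ(B_l). -/
import Mathlib


/-- `eps l i` is the standard basis vector of `ℝ^l` with `1`-based index `i`. -/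
def eps (l : ℕ) (i : ℕ) : Fin l → ℝ := fun j => if (j : ℕ) + 1 = i then 1 else 0

/-- The root system `Φ(B_l)` in `ℝ^l`: the vectors `±ε_i` (`1 ≤ i ≤ l`) together with
`±ε_i ± ε_j` (`1 ≤ i < j ≤ l`, all four sign choices). -/
def PhiB (l : ℕ) : Set (Fin l → ℝ) :=
  {v | ∃ i, 1 ≤ i ∧ i ≤ l ∧ (v = eps l i ∨ v = -eps l i)} ∪
  {v | ∃ i j, 1 ≤ i ∧ i < j ∧ j ≤ l ∧
      (v = eps l i + eps l j ∨ v = eps l i - eps l j ∨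
       v = -eps l i + eps l j ∨ v = -eps l i - eps l j)}

/-- The positive roots of `B_l`: the `ε_i` and the `ε_i ± ε_j` with `i < j`. -/
def PosB (l : ℕ) : Set (Fin l → ℝ) :=
  {v | ∃ i, 1 ≤ i ∧ i ≤ l ∧ v = eps l i} ∪
  {v | ∃ i j, 1 ≤ i ∧ i < j ∧ j ≤ l ∧ (v = eps l i + eps l j ∨ v = eps l i - eps l j)}

/-- `Ψ = {ε₁} ∪ {ε_j + ε_{j+1} : 1 ≤ j ≤ l-1}`. -/
noncomputable def PsiB (l : ℕ) : Finset (Fin l → ℝ) :=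
  insert (eps l 1) ((Finset.Icc 1 (l - 1)).image fun j => eps l j + eps l (j + 1))


lemma eps_apply (l i : ℕ) (x : Fin l) : eps l i x = if (x : ℕ) + 1 = i then 1 else 0 := rfl

lemma f_inj (l j j' : ℕ) (hj : 1 ≤ j) (hjl : j ≤ l - 1) (hj' : 1 ≤ j') (hj'l : j' ≤ l - 1)
    (h : eps l j + eps l (j + 1) = eps l j' + eps l (j' + 1)) : j = j' := by
  by_contra hne
  rcases Nat.lt_or_ge j j' with hlt | hge
  · have h1 := congrFun h ⟨j - 1, by omega⟩
    simp only [Pi.add_apply, eps_apply, Fin.val_mk] at h1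
    have e1 : j - 1 + 1 = j := by omega
    rw [e1, if_pos rfl, if_neg (show ¬ j = j + 1 by omega),
      if_neg (show ¬ j = j' by omega), if_neg (show ¬ j = j' + 1 by omega)] at h1
    norm_num at h1
  · have h2 := congrFun h ⟨j' - 1, by omega⟩
    simp only [Pi.add_apply, eps_apply, Fin.val_mk] at h2
    have e2 : j' - 1 + 1 = j' := by omega
    rw [e2, if_neg (show ¬ j' = j by omega), if_neg (show ¬ j' = j + 1 by omega),
      if_pos rfl, if_neg (show ¬ j' = j' + 1 by omega)] at h2
    norm_num at h2

lemma eps1_ne (l j : ℕ) (hj : 1 ≤ j) (hjl : j ≤ l - 1) :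
    eps l j + eps l (j + 1) ≠ eps l 1 := by
  intro h
  have h1 := congrFun h ⟨j, by omega⟩
  simp only [Pi.add_apply, eps_apply, Fin.val_mk] at h1
  rw [if_neg (show ¬ j + 1 = j by omega), if_neg (show ¬ j + 1 = 1 by omega)] at h1
  norm_num at h1

noncomputable def ip (l : ℕ) (a b : Fin l → ℝ) : ℝ := ∑ k, a k * b k

lemma ip_add_left (l : ℕ) (a b c : Fin l → ℝ) : ip l (a + b) c = ip l a c + ip l b c := by
  simp [ip, add_mul, Finset.sum_add_distrib]

lemma ip_add_right (l : ℕ) (a b c : Fin l → ℝ) : ip l a (b + c) = ip l a b + ip l a c := by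
  simp [ip, mul_add, Finset.sum_add_distrib]

lemma ip_neg_left (l : ℕ) (a b : Fin l → ℝ) : ip l (-a) b = -ip l a b := by
  simp [ip, neg_mul, Finset.sum_neg_distrib]

lemma ip_neg_right (l : ℕ) (a b : Fin l → ℝ) : ip l a (-b) = -ip l a b := by
  simp [ip, mul_neg, Finset.sum_neg_distrib]

lemma ip_sub_left (l : ℕ) (a b c : Fin l → ℝ) : ip l (a - b) c = ip l a c - ip l b c := by
  rw [sub_eq_add_neg, ip_add_left, ip_neg_left]; ring

lemma ip_sub_right (l : ℕ) (a b c : Fin l → ℝ) : ip l a (b - c) = ip l a b - ip l a c := by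
  rw [sub_eq_add_neg, ip_add_right, ip_neg_right]; ring

lemma ip_eps_self (l i : ℕ) (h1 : 1 ≤ i) (h2 : i ≤ l) : ip l (eps l i) (eps l i) = 1 := by
  rw [ip]
  have : ∀ k : Fin l, eps l i k * eps l i k = if k = (⟨i - 1, by omega⟩ : Fin l) then 1 else 0 := by
    intro k
    simp only [eps_apply, Fin.ext_iff, Fin.val_mk]
    split_ifs <;> norm_num <;> omega
  simp [this]

lemma ip_eps_ne (l i j : ℕ) (h : i ≠ j) : ip l (eps l i) (eps l j) = 0 := by
  rw [ip]
  apply Finset.sum_eq_zero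
  intro k _
  simp only [eps_apply]
  split_ifs <;> norm_num; omega

lemma ip_eps_nonneg (l i j : ℕ) : 0 ≤ ip l (eps l i) (eps l j) := by
  apply Finset.sum_nonneg
  intro k _
  simp only [eps_apply]
  split_ifs <;> norm_num

lemma root_ip_le (l : ℕ) (v : Fin l → ℝ)
    (hv : v ∈ ({v | ∃ i, 1 ≤ i ∧ i ≤ l ∧ (v = eps l i ∨ v = -eps l i)} ∪
      {v | ∃ i j, 1 ≤ i ∧ i < j ∧ j ≤ l ∧
        (v = eps l i + eps l j ∨ v = eps l i - eps l j ∨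
         v = -eps l i + eps l j ∨ v = -eps l i - eps l j)} : Set (Fin l → ℝ))) :
    ip l v v ≤ 2 := by
  rcases hv with ⟨i, h1, h2, hv | hv⟩ | ⟨i, j, h1, h2, h3, hv | hv | hv | hv⟩
  · subst hv; rw [ip_eps_self l i h1 h2]; norm_num
  · subst hv; rw [ip_neg_left, ip_neg_right, neg_neg, ip_eps_self l i h1 h2]; norm_num
  all_goals subst hv <;>
    simp only [ip_add_left, ip_add_right, ip_sub_left, ip_sub_right, ip_neg_left, ip_neg_right,
      ip_eps_self l i h1 (by omega), ip_eps_self l j (by omega) h3,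
      ip_eps_ne l i j (by omega), ip_eps_ne l j i (by omega)] <;> norm_num

lemma sum_ip_ge (l : ℕ) (hl : 3 ≤ l) (β β' : Fin l → ℝ)
    (hβ : β = eps l 1 ∨ ∃ j, 1 ≤ j ∧ j ≤ l - 1 ∧ β = eps l j + eps l (j + 1))
    (hβ' : β' = eps l 1 ∨ ∃ j, 1 ≤ j ∧ j ≤ l - 1 ∧ β' = eps l j + eps l (j + 1)) :
    3 ≤ ip l (β + β') (β + β') := by
  have h1 : ip l (eps l 1) (eps l 1) = 1 := ip_eps_self l 1 le_rfl (by omega)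
  rcases hβ with rfl | ⟨j, hj1, hj2, rfl⟩ <;> rcases hβ' with rfl | ⟨j', hj1', hj2', rfl⟩
  · simp only [ip_add_left, ip_add_right, h1]; norm_num
  · simp only [ip_add_left, ip_add_right, h1,
      ip_eps_self l j' hj1' (by omega), ip_eps_self l (j' + 1) (by omega) (by omega)]
    linarith [ip_eps_nonneg l 1 j', ip_eps_nonneg l 1 (j' + 1), ip_eps_nonneg l j' 1,
      ip_eps_nonneg l (j' + 1) 1, ip_eps_nonneg l j' (j' + 1), ip_eps_nonneg l (j' + 1) j']
  · simp only [ip_add_left, ip_add_right, h1,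
      ip_eps_self l j hj1 (by omega), ip_eps_self l (j + 1) (by omega) (by omega)]
    linarith [ip_eps_nonneg l 1 j, ip_eps_nonneg l 1 (j + 1), ip_eps_nonneg l j 1,
      ip_eps_nonneg l (j + 1) 1, ip_eps_nonneg l j (j + 1), ip_eps_nonneg l (j + 1) j]
  · simp only [ip_add_left, ip_add_right,
      ip_eps_self l j hj1 (by omega), ip_eps_self l (j + 1) (by omega) (by omega),
      ip_eps_self l j' hj1' (by omega), ip_eps_self l (j' + 1) (by omega) (by omega)]
    linarith [ip_eps_nonneg l j j', ip_eps_nonneg l j (j' + 1), ip_eps_nonneg l (j + 1) j',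
      ip_eps_nonneg l (j + 1) (j' + 1), ip_eps_nonneg l j' j, ip_eps_nonneg l j' (j + 1),
      ip_eps_nonneg l (j' + 1) j, ip_eps_nonneg l (j' + 1) (j + 1),
      ip_eps_nonneg l j (j + 1), ip_eps_nonneg l (j + 1) j,
      ip_eps_nonneg l j' (j' + 1), ip_eps_nonneg l (j' + 1) j']

lemma mem_psi (l : ℕ) (β : Fin l → ℝ) :
    β ∈ PsiB l ↔ β = eps l 1 ∨ ∃ j, 1 ≤ j ∧ j ≤ l - 1 ∧ β = eps l j + eps l (j + 1) := by
  simp only [PsiB, Finset.mem_insert, Finset.mem_image, Finset.mem_Icc]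
  constructor
  · rintro (h | ⟨j, ⟨h1, h2⟩, h3⟩)
    · exact Or.inl h
    · exact Or.inr ⟨j, h1, h2, h3.symm⟩
  · rintro (h | ⟨j, h1, h2, h3⟩)
    · exact Or.inl h
    · exact Or.inr ⟨j, ⟨h1, h2⟩, h3.symm⟩

noncomputable def mjf (l : ℕ) (c : ℝ) (j : ℕ) : ℝ :=
  if (l - j) % 2 = 0 then (l : ℝ) - j else (l : ℝ) - 1 - j + c

noncomputable def M0f (l : ℕ) (c : ℝ) : ℝ :=
  if (l - 1) % 2 = 0 then (l : ℝ) - 1 + c else (l : ℝ)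

noncomputable def mfun (l : ℕ) (c : ℝ) (β : Fin l → ℝ) : ℝ :=
  (if β = eps l 1 then M0f l c else 0) +
    ∑ j ∈ Finset.Icc 1 (l - 1), (if β = eps l j + eps l (j + 1) then mjf l c j else 0)

lemma mfun_eps1 (l : ℕ) (hl : 3 ≤ l) (c : ℝ) : mfun l c (eps l 1) = M0f l c := by
  rw [mfun, if_pos rfl, Finset.sum_eq_zero, add_zero]
  intro j hj
  rw [Finset.mem_Icc] at hj
  rw [if_neg (fun h => eps1_ne l j hj.1 hj.2 h.symm)]

lemma mfun_f (l : ℕ) (c : ℝ) (j : ℕ) (hj1 : 1 ≤ j) (hj2 : j ≤ l - 1) :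
    mfun l c (eps l j + eps l (j + 1)) = mjf l c j := by
  rw [mfun, if_neg (eps1_ne l j hj1 hj2), zero_add]
  rw [Finset.sum_eq_single_of_mem j (Finset.mem_Icc.2 ⟨hj1, hj2⟩)]
  · rw [if_pos rfl]
  · intro j' hj' hne
    rw [Finset.mem_Icc] at hj'
    exact if_neg (fun h => hne (f_inj l j' j hj'.1 hj'.2 hj1 hj2 h.symm))

lemma M0f_pos (l : ℕ) (hl : 3 ≤ l) (c : ℝ) (hc : 0 < c) : 0 < M0f l c := by
  rw [M0f]
  have : (3 : ℝ) ≤ (l : ℝ) := by exact_mod_cast hl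
  split_ifs <;> linarith

lemma mjf_pos (l : ℕ) (c : ℝ) (hc : 0 < c) (j : ℕ) (hj1 : 1 ≤ j) (hj2 : j ≤ l - 1) :
    0 < mjf l c j := by
  rw [mjf]
  have h1 : (j : ℝ) + 1 ≤ (l : ℝ) := by exact_mod_cast (by omega : j + 1 ≤ l)
  split_ifs <;> linarith

lemma lhs_coord (l : ℕ) (hl : 3 ≤ l) (c : ℝ) (x : Fin l) :
    ((∑ i ∈ Finset.Icc 1 l, ∑ j ∈ Finset.Icc (i + 1) l,
        ((eps l i - eps l j) + (eps l i + eps l j)))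
      + c • (∑ i ∈ Finset.Icc 1 l, eps l i)) x
    = ((l - ((x : ℕ) + 1) : ℕ) : ℝ) * 2 + c := by
  have hx : (x : ℕ) < l := x.isLt
  simp only [Pi.add_apply, Pi.smul_apply, Finset.sum_apply, Pi.sub_apply, smul_eq_mul, eps_apply]
  have h1 : ∀ i ∈ Finset.Icc 1 l,
      (∑ j ∈ Finset.Icc (i + 1) l,
        ((if (x : ℕ) + 1 = i then (1:ℝ) else 0) - (if (x : ℕ) + 1 = j then (1:ℝ) else 0)
          + ((if (x : ℕ) + 1 = i then (1:ℝ) else 0) + (if (x : ℕ) + 1 = j then (1:ℝ) else 0))))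
      = (if (x : ℕ) + 1 = i then ((l - i : ℕ) : ℝ) * 2 else 0) := by
    intro i _
    rw [Finset.sum_congr rfl
      (fun j _ => by ring :
        ∀ j ∈ Finset.Icc (i + 1) l, ((if (x : ℕ) + 1 = i then (1:ℝ) else 0)
          - (if (x : ℕ) + 1 = j then (1:ℝ) else 0)
          + ((if (x : ℕ) + 1 = i then (1:ℝ) else 0) + (if (x : ℕ) + 1 = j then (1:ℝ) else 0)))
          = 2 * (if (x : ℕ) + 1 = i then (1:ℝ) else 0)),
      Finset.sum_const, Nat.card_Icc]
    have : l + 1 - (i + 1) = l - i := by omega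
    rw [this, nsmul_eq_mul]
    split_ifs <;> ring
  rw [Finset.sum_congr rfl h1, Finset.sum_ite_eq,
    if_pos (Finset.mem_Icc.2 ⟨by omega, by omega⟩),
    Finset.sum_ite_eq, if_pos (Finset.mem_Icc.2 ⟨by omega, by omega⟩)]
  ring

lemma rhs_coord (l : ℕ) (c : ℝ) (x : Fin l) :
    (M0f l c • eps l 1
      + ∑ j ∈ Finset.Icc 1 (l - 1), mjf l c j • (eps l j + eps l (j + 1))) x
    = (if (x : ℕ) + 1 = 1 then M0f l c else 0)
      + ((if (x : ℕ) + 1 ∈ Finset.Icc 1 (l - 1) then mjf l c ((x : ℕ) + 1) else 0)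
        + (if (x : ℕ) ∈ Finset.Icc 1 (l - 1) then mjf l c (x : ℕ) else 0)) := by
  simp only [Pi.add_apply, Pi.smul_apply, Finset.sum_apply, smul_eq_mul, eps_apply]
  have h1 : ∀ j ∈ Finset.Icc 1 (l - 1),
      mjf l c j * ((if (x : ℕ) + 1 = j then (1:ℝ) else 0) + (if (x : ℕ) + 1 = j + 1 then (1:ℝ) else 0))
      = (if (x : ℕ) + 1 = j then mjf l c j else 0) + (if (x : ℕ) = j then mjf l c j else 0) := by
    intro j _
    have : ((x : ℕ) + 1 = j + 1) ↔ ((x : ℕ) = j) := by omega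
    simp only [this]
    split_ifs <;> ring
  rw [Finset.sum_congr rfl h1, Finset.sum_add_distrib, Finset.sum_ite_eq, Finset.sum_ite_eq]
  split_ifs <;> ring

lemma scalar_id (l : ℕ) (hl : 3 ≤ l) (c : ℝ) (n : ℕ) (hn : n < l) :
    ((l - (n + 1) : ℕ) : ℝ) * 2 + c
    = (if n + 1 = 1 then M0f l c else 0)
      + ((if n + 1 ∈ Finset.Icc 1 (l - 1) then mjf l c (n + 1) else 0)
        + (if n ∈ Finset.Icc 1 (l - 1) then mjf l c n else 0)) := by
  have hcast : ((l - (n + 1) : ℕ) : ℝ) = (l : ℝ) - (n : ℝ) - 1 := by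
    rw [Nat.cast_sub (by omega)]; push_cast; ring
  rw [hcast]
  simp only [Finset.mem_Icc, mjf, M0f]
  rcases Nat.lt_trichotomy n 0 with h0 | h0 | h0
  · omega
  · subst h0
    rw [if_pos rfl, if_pos (show 1 ≤ 0 + 1 ∧ 0 + 1 ≤ l - 1 by omega),
      if_neg (show ¬(1 ≤ 0 ∧ 0 ≤ l - 1) by omega)]
    have e : l - (0 + 1) = l - 1 := by omega
    simp only [e]
    split_ifs <;> push_cast <;> first | omega | linarith
  · rcases Nat.lt_or_ge n (l - 1) with h2 | h2
    · rw [if_neg (show ¬(n + 1 = 1) by omega), if_pos (show 1 ≤ n + 1 ∧ n + 1 ≤ l - 1 by omega),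
        if_pos (show 1 ≤ n ∧ n ≤ l - 1 by omega)]
      split_ifs <;> push_cast <;> first | omega | linarith
    · have hn1 : n = l - 1 := by omega
      have hr : (n : ℝ) = (l : ℝ) - 1 := by
        rw [hn1, Nat.cast_sub (by omega)]; norm_num
      rw [if_neg (show ¬(n + 1 = 1) by omega), if_neg (show ¬(1 ≤ n + 1 ∧ n + 1 ≤ l - 1) by omega),
        if_pos (show 1 ≤ n ∧ n ≤ l - 1 by omega)]
      split_ifs <;> push_cast <;> first | omega | linarith

lemma big_identity (l : ℕ) (hl : 3 ≤ l) (c : ℝ) :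
    (∑ i ∈ Finset.Icc 1 l, ∑ j ∈ Finset.Icc (i + 1) l,
        ((eps l i - eps l j) + (eps l i + eps l j)))
      + c • (∑ i ∈ Finset.Icc 1 l, eps l i)
    = ∑ β ∈ PsiB l, mfun l c β • β := by
  have hnot : eps l 1 ∉ (Finset.Icc 1 (l - 1)).image fun j => eps l j + eps l (j + 1) := by
    rw [Finset.mem_image]
    rintro ⟨j, hj, hje⟩
    rw [Finset.mem_Icc] at hj
    exact eps1_ne l j hj.1 hj.2 hje
  have hinj : ∀ j ∈ Finset.Icc 1 (l - 1), ∀ j' ∈ Finset.Icc 1 (l - 1),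
      (fun j => eps l j + eps l (j + 1)) j = (fun j => eps l j + eps l (j + 1)) j' → j = j' := by
    intro j hj j' hj' h
    rw [Finset.mem_Icc] at hj hj'
    exact f_inj l j j' hj.1 hj.2 hj'.1 hj'.2 h
  have hsum : ∑ j ∈ Finset.Icc 1 (l - 1),
      mfun l c (eps l j + eps l (j + 1)) • (eps l j + eps l (j + 1))
      = ∑ j ∈ Finset.Icc 1 (l - 1), mjf l c j • (eps l j + eps l (j + 1)) :=
    Finset.sum_congr rfl (fun j hj => by
      rw [Finset.mem_Icc] at hj
      rw [mfun_f l c j hj.1 hj.2])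
  rw [PsiB, Finset.sum_insert hnot, Finset.sum_image hinj, mfun_eps1 l hl c, hsum]
  funext x
  rw [lhs_coord l hl c x, rhs_coord l c x]
  exact scalar_id l hl c (x : ℕ) x.isLt

lemma span_psi (l : ℕ) (hl : 3 ≤ l) :
    Submodule.span ℝ ((PsiB l : Finset (Fin l → ℝ)) : Set (Fin l → ℝ)) = ⊤ := by
  have key : ∀ i : ℕ, 1 ≤ i → i ≤ l → eps l i ∈ Submodule.span ℝ ((PsiB l : Finset (Fin l → ℝ)) : Set (Fin l → ℝ)) := by
    intro i
    induction i with
    | zero => omega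
    | succ n ih =>
      intro h1 h2
      rcases Nat.eq_zero_or_pos n with hn | hn
      · subst hn
        exact Submodule.subset_span (by simp [PsiB])
      · have hmem : eps l n + eps l (n + 1) ∈ PsiB l := by
          rw [mem_psi]
          exact Or.inr ⟨n, hn, by omega, rfl⟩
        have h3 : eps l (n + 1) = (eps l n + eps l (n + 1)) - eps l n := by
          abel
        rw [h3]
        exact sub_mem (Submodule.subset_span hmem) (ih (by omega) (by omega))
  rw [eq_top_iff, ← (Pi.basisFun ℝ (Fin l)).span_eq]
  apply Submodule.span_le.2
  rintro v ⟨y, rfl⟩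
  have : (Pi.basisFun ℝ (Fin l)) y = eps l ((y : ℕ) + 1) := by
    rw [Pi.basisFun_apply]
    funext k
    rw [eps_apply, Pi.single_apply]
    congr 1
    simp only [eq_iff_iff, Fin.ext_iff]
    omega
  rw [this]
  exact key ((y : ℕ) + 1) (by omega) (by omega)

/-- Let `l ≥ 3` and `c > 0`, `σ = ∑_{1≤i<j≤l} ((ε_i-ε_j)+(ε_i+ε_j))`, `τ = ∑_{i=1}^l ε_i`.
Then (i) every element of `Ψ` is a positive root of `B_l` and `σ + c τ` is a positive
combination of `Ψ`; (ii) `Ψ` spans `ℝ^l`; (iii) no sum of two elements of `Ψ` lies in `Φ(B_l)`. -/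
theorem stmt_3 (l : ℕ) (hl : 3 ≤ l) (c : ℝ) (hc : 0 < c) :
    ((∀ β ∈ PsiB l, β ∈ PosB l) ∧
      ∃ m : (Fin l → ℝ) → ℝ, (∀ β ∈ PsiB l, 0 < m β) ∧
        (∑ i ∈ Finset.Icc 1 l, ∑ j ∈ Finset.Icc (i + 1) l,
            ((eps l i - eps l j) + (eps l i + eps l j)))
          + c • (∑ i ∈ Finset.Icc 1 l, eps l i)
          = ∑ β ∈ PsiB l, m β • β) ∧
    Submodule.span ℝ (PsiB l : Set (Fin l → ℝ)) = ⊤ ∧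
    (∀ β ∈ PsiB l, ∀ β' ∈ PsiB l, β + β' ∉ PhiB l) := by
  refine ⟨⟨?_, mfun l c, ?_, big_identity l hl c⟩, span_psi l hl, ?_⟩
  · intro β hβ
    rcases (mem_psi l β).1 hβ with rfl | ⟨j, hj1, hj2, rfl⟩
    · exact Or.inl ⟨1, le_rfl, by omega, rfl⟩
    · exact Or.inr ⟨j, j + 1, hj1, by omega, by omega, Or.inl rfl⟩
  · intro β hβ
    rcases (mem_psi l β).1 hβ with rfl | ⟨j, hj1, hj2, rfl⟩
    · rw [mfun_eps1 l hl c]; exact M0f_pos l hl c hc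
    · rw [mfun_f l c j hj1 hj2]; exact mjf_pos l c hc j hj1 hj2
  · intro β hβ β' hβ' hmem
    have h2 := root_ip_le l (β + β') hmem
    have h3 := sum_ip_ge l hl β β' ((mem_psi l β).1 hβ) ((mem_psi l β').1 hβ')
    linarith
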